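/- Composite correctness of one tape-move-left update: let s : ℤ → {0,1} represent a bi-infinite tape with head at 0, let r = C⁺(s₀ s₁ s₂ …), l = C⁻(s₋₁ s₋₂ …), and let s' ∈ {0,1} be the symbol written. Then the new encodings after writing s' at position 0 and moving the head left are r_new = −r/4 + (2 s₋₁ + 1)/4 + (2 s₀ + 1)/16 − (2 s' + 1)/16 and l_new = −4l + (2 s₋₁ + 1), and these equal C⁺ and C⁻ of the updated tape halves respectively. -/

import Mathlib

/-- A real number is a bit: `0` or `1`. -/
def IsBit (x : ℝ) : Prop := x = 0 ∨ x = 1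

/-- Cantor-like encoding of the right half-tape of a bi-infinite tape `f : ℤ → ℝ` read
from head position `h`: `C⁺(f_h f_{h+1} …) = ∑_{k≥0} (-1)^k (2 f_{h+k} + 1)/4^(k+1)`. -/
noncomputable def Cright (f : ℤ → ℝ) (h : ℤ) : ℝ :=
  ∑' k : ℕ, (-1 : ℝ) ^ k * (2 * f (h + k) + 1) / 4 ^ (k + 1)

/-- Cantor-like encoding of the left half-tape of a bi-infinite tape `f : ℤ → ℝ` read
from head position `h`: `C⁻(f_{h-1} f_{h-2} …) = ∑_{k≥1} (-1)^(k+1) (2 f_{h-k} + 1)/4^k`. -/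
noncomputable def Cleft (f : ℤ → ℝ) (h : ℤ) : ℝ :=
  ∑' k : ℕ, (-1 : ℝ) ^ k * (2 * f (h - (k + 1)) + 1) / 4 ^ (k + 1)

lemma summable_enc (u : ℕ → ℝ) (hu : ∀ n, IsBit (u n)) :
    Summable (fun k : ℕ => (-1 : ℝ) ^ k * (2 * u k + 1) / 4 ^ (k + 1)) := by
  apply Summable.of_norm_bounded (g := fun k : ℕ => (3 / 4 : ℝ) * (1 / 4) ^ k)
  · exact (summable_geometric_of_lt_one (by norm_num) (by norm_num)).mul_left _
  · intro k
    have h4 : (0:ℝ) < 4 ^ (k + 1) := by positivity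
    have hb : |2 * u k + 1| ≤ 3 := by rcases hu k with h | h <;> simp [h] <;> norm_num
    have : ‖(-1 : ℝ) ^ k * (2 * u k + 1) / 4 ^ (k + 1)‖ = |2 * u k + 1| / 4 ^ (k + 1) := by
      rw [Real.norm_eq_abs, abs_div, abs_mul, abs_pow, abs_neg, abs_one, one_pow, one_mul,
        abs_of_pos h4]
    rw [this]
    rw [div_le_iff₀ h4]
    calc |2 * u k + 1| ≤ 3 := hb
      _ ≤ 3 / 4 * (1 / 4) ^ k * 4 ^ (k + 1) := by
          rw [pow_succ]
          field_simp
          rw [← mul_pow]; norm_num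

theorem tape_move_left_update (s : ℤ → ℝ) (hs : ∀ n, IsBit (s n)) (s' : ℝ) (hs' : IsBit s') :
    let r := Cright s 0
    let l := Cleft s 0
    let t : ℤ → ℝ := fun n => if n = 0 then s' else s n
    (-r / 4 + (2 * s (-1) + 1) / 4 + (2 * s 0 + 1) / 16 - (2 * s' + 1) / 16
        = Cright t (-1)) ∧
    (-4 * l + (2 * s (-1) + 1) = Cleft t (-1)) := by
  intro r l t
  have hb : ∀ n, IsBit (t n) := by
    intro n
    by_cases h : n = 0 <;> simp [t, h, hs', hs n]
  -- right part
  set f : ℕ → ℝ := fun k => (-1 : ℝ) ^ k * (2 * s (0 + k) + 1) / 4 ^ (k + 1) with hfdef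
  set g : ℕ → ℝ := fun k => (-1 : ℝ) ^ k * (2 * t (-1 + k) + 1) / 4 ^ (k + 1) with hgdef
  have hf : Summable f := summable_enc (fun k => s (0 + k)) (fun k => hs _)
  have hg : Summable g := summable_enc (fun k => t (-1 + k)) (fun k => hb _)
  have hg1 : Summable (fun k => g (k + 1)) := (summable_nat_add_iff 1).2 hg
  have hf1 : Summable (fun k => f (k + 1)) := (summable_nat_add_iff 1).2 hf
  have hrr : r = Cright s 0 := rfl
  have hrtsum : r = f 0 + ∑' k : ℕ, f (k + 1) := by
    rw [hrr, Cright, hfdef, Summable.tsum_eq_zero_add hf]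
  have hgtsum : Cright t (-1) = g 0 + (g 1 + ∑' k : ℕ, g (k + 1 + 1)) := by
    rw [Cright, ← hgdef, Summable.tsum_eq_zero_add hg, Summable.tsum_eq_zero_add hg1]
  have hf0 : f 0 = (2 * s 0 + 1) / 4 := by norm_num [hfdef]
  have hg0 : g 0 = (2 * s (-1) + 1) / 4 := by norm_num [hgdef, t]
  have hg1v : g 1 = -((2 * s' + 1) / 16) := by
    norm_num [hgdef, t]
    ring
  have htail : ∑' k : ℕ, g (k + 1 + 1) = ∑' k : ℕ, -(f (k + 1)) / 4 := by
    refine tsum_congr fun k => ?_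
    have ht : t (-1 + ((k : ℤ) + 1 + 1)) = s (0 + ((k : ℤ) + 1)) := by
      have h1 : (-1 : ℤ) + ((k : ℤ) + 1 + 1) = (k : ℤ) + 1 := by ring
      have h2 : (0 : ℤ) + ((k : ℤ) + 1) = (k : ℤ) + 1 := by ring
      rw [h1, h2]
      have : ((k : ℤ) + 1) ≠ 0 := by positivity
      simp [t, this]
    simp only [hgdef, hfdef]
    push_cast
    rw [ht]
    rw [pow_succ (4:ℝ) (k + 1 + 1)]
    ring
  have hright : -r / 4 + (2 * s (-1) + 1) / 4 + (2 * s 0 + 1) / 16 - (2 * s' + 1) / 16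
      = Cright t (-1) := by
    rw [hgtsum, htail, hrtsum, hf0, hg0, hg1v, tsum_div_const, tsum_neg]
    ring
  -- left part
  set p : ℕ → ℝ := fun k => (-1 : ℝ) ^ k * (2 * s (0 - ((k : ℤ) + 1)) + 1) / 4 ^ (k + 1)
    with hpdef
  set q : ℕ → ℝ := fun k => (-1 : ℝ) ^ k * (2 * t (-1 - ((k : ℤ) + 1)) + 1) / 4 ^ (k + 1)
    with hqdef
  have hp : Summable p := summable_enc (fun k => s (0 - ((k : ℤ) + 1))) (fun k => hs _)
  have hp1 : Summable (fun k => p (k + 1)) := (summable_nat_add_iff 1).2 hp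
  have hltsum : l = p 0 + ∑' k : ℕ, p (k + 1) := by
    rw [show l = Cleft s 0 from rfl, Cleft, ← hpdef, Summable.tsum_eq_zero_add hp]
  have hp0 : p 0 = (2 * s (-1) + 1) / 4 := by norm_num [hpdef]
  have hqtail : Cleft t (-1) = ∑' k : ℕ, -4 * p (k + 1) := by
    rw [Cleft, ← hqdef]
    refine tsum_congr fun k => ?_
    have ht : t (-1 - ((k : ℤ) + 1)) = s (0 - (((k : ℤ) + 1) + 1)) := by
      have h1 : (-1 : ℤ) - ((k : ℤ) + 1) = 0 - (((k : ℤ) + 1) + 1) := by ring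
      rw [h1]
      have : (0 : ℤ) - (((k : ℤ) + 1) + 1) ≠ 0 := by omega
      simp only [t]
      exact if_neg this
    simp only [hqdef, hpdef]
    push_cast
    rw [ht]
    rw [pow_succ (4:ℝ) (k + 1)]
    ring
  have hleft : -4 * l + (2 * s (-1) + 1) = Cleft t (-1) := by
    rw [hqtail, hltsum, hp0, tsum_mul_left]
    ring
  exact ⟨hright, hleft⟩
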